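/- There exists an n-Smullyan model which satisfies F-Tarski (there is no M-predicate H with Φ(H) = False_M) but does not satisfy T-Tarski (there is no M-predicate H with Φ(H) = True_M). Concretely, the simple model with Σ = {n, ♯} and Φ(♯) = {X♯n^i : i ∈ ℕ, X ∈ Σ*, the number of occurrences of n in X is odd}, which is an n-Smullyan model, is such a model. -/
import Mathlib


/-- A Smullyan model over a set of symbols `α`: a set `pred` of predicates
(finite strings over `α`) satisfying the prefix-freeness requirement (†), together
with a naming function `phi` assigning a set of strings to each string
(only its values on `pred` are relevant). -/
structure SmullyanModel (α : Type) where
  pred : Set (List α)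
  prefixFree : ∀ H ∈ pred, ∀ X : List α, X ≠ [] → H ++ X ∉ pred
  phi : List α → Set (List α)

namespace SmullyanModel

variable {α : Type} (M : SmullyanModel α)

/-- The set of `M`-sentences: strings of the form `H ++ X` with `H` a predicate. -/
def sent : Set (List α) := {S | ∃ H ∈ M.pred, ∃ X : List α, S = H ++ X}

/-- `Sent_M^+ = Sent_M \ Pred_M`. -/
def sentPlus : Set (List α) := M.sent \ M.pred

/-- `True_M`: the set of true `M`-sentences. -/
def trueSet : Set (List α) := {S | ∃ H ∈ M.pred, ∃ X ∈ M.phi H, S = H ++ X}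

/-- `True_M^+ = True_M \ Pred_M`. -/
def truePlus : Set (List α) := M.trueSet \ M.pred

/-- `False_M = Sent_M \ True_M`. -/
def falseSet : Set (List α) := M.sent \ M.trueSet

/-- `False_M^+ = Sent_M^+ \ True_M^+`. -/
def falsePlus : Set (List α) := M.sentPlus \ M.truePlus

/-- `M ⊨ S`. -/
def Sat (S : List α) : Prop := S ∈ M.trueSet

/-- `S ∈ Sent_M^+` is an `M`-fixed point of `H` if `M ⊨ S ↔ M ⊨ HS`. -/
def IsFixedPoint (H S : List α) : Prop :=
  S ∈ M.sentPlus ∧ (M.Sat S ↔ M.Sat (H ++ S))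

/-- `M` is an `n`-Smullyan model (with negation symbol `n : α`):
for every predicate `H`, `nH` is a predicate and `Φ(nH) = Σ* \ Φ(H)`. -/
def IsNModel (n : α) : Prop :=
  ∀ H ∈ M.pred, (n :: H) ∈ M.pred ∧ M.phi (n :: H) = {X : List α | X ∉ M.phi H}

/-- `M` is an `r`-Smullyan model (with repeat symbol `r : α`):
for every predicate `H`, `rH` is a predicate and `Φ(rH) = {K ∈ Pred : KK ∈ Φ(H)}`. -/
def IsRModel (r : α) : Prop :=
  ∀ H ∈ M.pred, (r :: H) ∈ M.pred ∧
    M.phi (r :: H) = {K : List α | K ∈ M.pred ∧ K ++ K ∈ M.phi H}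

/-- FPT: every `M`-predicate has an `M`-fixed point. -/
def FPT : Prop := ∀ H ∈ M.pred, ∃ S : List α, M.IsFixedPoint H S

/-- T-Tarski: no `M`-predicate names `True_M`. -/
def TTarski : Prop := ¬ ∃ H ∈ M.pred, M.phi H = M.trueSet

/-- F-Tarski: no `M`-predicate names `False_M`. -/
def FTarski : Prop := ¬ ∃ H ∈ M.pred, M.phi H = M.falseSet

/-- T-Tarski⁺: there is no `M`-predicate `H` with `True_M⁺ = Φ(H) ∩ Sent_M⁺`. -/
def TTarskiPlus : Prop := ¬ ∃ H ∈ M.pred, M.truePlus = M.phi H ∩ M.sentPlus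

/-- F-Tarski⁺: there is no `M`-predicate `H` with `False_M⁺ = Φ(H) ∩ Sent_M⁺`. -/
def FTarskiPlus : Prop := ¬ ∃ H ∈ M.pred, M.falsePlus = M.phi H ∩ M.sentPlus

/-- mG1. -/
def MG1 : Prop :=
  ∀ H ∈ M.pred, M.phi H ⊆ M.trueSet →
    ∃ S ∈ M.sent, M.Sat S ∧ S ∉ M.phi H

/-- mG1⁺. -/
def MG1Plus : Prop :=
  ∀ H ∈ M.pred, M.phi H ∩ M.sentPlus ⊆ M.truePlus →
    ∃ S ∈ M.sentPlus, M.Sat S ∧ S ∉ M.phi H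

/-- G1 (for `n`-Smullyan models). -/
def G1 (n : α) : Prop :=
  ∀ H ∈ M.pred, M.phi H ⊆ M.trueSet →
    ∃ S ∈ M.sent, S ∉ M.phi H ∧ (n :: S) ∉ M.phi H

/-- G1⁺ (for `n`-Smullyan models). -/
def G1Plus (n : α) : Prop :=
  ∀ H ∈ M.pred, M.phi H ∩ M.sentPlus ⊆ M.truePlus →
    ∃ S ∈ M.sentPlus, S ∉ M.phi H ∧ (n :: S) ∉ M.phi H

/-- The predicate set of a simple model: strings `X♯` where `X` contains no `♯`. -/
def simplePred (sharp : α) : Set (List α) :=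
  {L | ∃ X : List α, sharp ∉ X ∧ L = X ++ [sharp]}

end SmullyanModel

inductive SmSym where
  | n
  | sharp
deriving DecidableEq


namespace Stmt18Aux

open SmSym

/-- The intended value of `Φ(♯)`. -/
def sS : Set (List SmSym) :=
  {L : List SmSym | ∃ X : List SmSym, ∃ i : ℕ, Odd (X.count SmSym.n) ∧
    L = X ++ SmSym.sharp :: List.replicate i SmSym.n}

/-- Membership in `sS` read off the reversed string. -/
def gP : List SmSym → Prop
  | [] => False
  | SmSym.n :: L => gP L
  | SmSym.sharp :: L => Odd (L.count SmSym.n)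

lemma gP_iff (M : List SmSym) :
    gP M ↔ ∃ i : ℕ, ∃ X : List SmSym,
      M = List.replicate i SmSym.n ++ SmSym.sharp :: X ∧ Odd (X.count SmSym.n) := by
  induction M with
  | nil =>
    simp only [gP, false_iff]
    rintro ⟨i, X, h, -⟩
    exact absurd h.symm (by simp)
  | cons a M ih =>
    cases a with
    | n =>
      rw [show gP (SmSym.n :: M) = gP M from rfl, ih]
      constructor
      · rintro ⟨i, X, rfl, hX⟩
        exact ⟨i + 1, X, by simp [List.replicate_succ], hX⟩
      · rintro ⟨i, X, h, hX⟩
        cases i with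
        | zero => simp at h
        | succ i =>
          rw [List.replicate_succ, List.cons_append, List.cons.injEq] at h
          exact ⟨i, X, h.2, hX⟩
    | sharp =>
      rw [show gP (SmSym.sharp :: M) = Odd (M.count SmSym.n) from rfl]
      constructor
      · intro h; exact ⟨0, M, by simp, h⟩
      · rintro ⟨i, X, h, hX⟩
        cases i with
        | zero =>
          simp only [List.replicate, List.nil_append, List.cons.injEq] at h
          rw [h.2]; exact hX
        | succ i => simp [List.replicate_succ] at h

lemma mem_sS_iff (L : List SmSym) : L ∈ sS ↔ gP L.reverse := by
  rw [gP_iff]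
  constructor
  · rintro ⟨X, i, hX, rfl⟩
    refine ⟨i, X.reverse, ?_, by simpa using hX⟩
    simp [List.reverse_append, List.reverse_replicate]
  · rintro ⟨i, X, h, hX⟩
    refine ⟨X.reverse, i, by simpa using hX, ?_⟩
    have := congrArg List.reverse h
    simpa [List.reverse_append, List.reverse_replicate] using this

lemma gext (k : ℕ) (A : List SmSym) :
    gP (A ++ SmSym.sharp :: List.replicate k SmSym.n) ↔ (gP A ↔ Even k) := by
  induction A with
  | nil =>
    show Odd ((List.replicate k SmSym.n).count SmSym.n) ↔ (False ↔ Even k)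
    rw [List.count_replicate_self, false_iff, Nat.not_even_iff_odd]
  | cons a A ih =>
    cases a with
    | n => simpa [gP] using ih
    | sharp =>
      show Odd ((A ++ SmSym.sharp :: List.replicate k SmSym.n).count SmSym.n) ↔ _
      rw [show gP (SmSym.sharp :: A) = Odd (A.count SmSym.n) from rfl]
      simp [List.count_append, List.count_replicate_self, List.count_cons,
        Nat.odd_add]

/-- Key parity lemma: a sentence `n^k ♯ Z` is in `sS` iff
(`Z ∈ sS` iff `k` even). -/
lemma sent_mem_sS (k : ℕ) (Z : List SmSym) :
    (List.replicate k SmSym.n ++ SmSym.sharp :: Z) ∈ sS ↔ (Z ∈ sS ↔ Even k) := by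
  rw [mem_sS_iff, mem_sS_iff]
  have : (List.replicate k SmSym.n ++ SmSym.sharp :: Z).reverse
      = Z.reverse ++ SmSym.sharp :: List.replicate k SmSym.n := by
    simp [List.reverse_append, List.reverse_replicate]
  rw [this, gext]

lemma all_n_of_not_sharp {X : List SmSym} (h : SmSym.sharp ∉ X) :
    X = List.replicate X.length SmSym.n := by
  apply List.eq_replicate_of_mem
  intro b hb
  cases b with
  | n => rfl
  | sharp => exact absurd hb h

lemma count_n_all_n {X : List SmSym} (h : SmSym.sharp ∉ X) :
    X.count SmSym.n = X.length := by
  conv_lhs => rw [all_n_of_not_sharp h]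
  simp [List.count_replicate_self]

lemma firstSplit : ∀ T : List SmSym, SmSym.sharp ∈ T →
    ∃ k : ℕ, ∃ Z : List SmSym, T = List.replicate k SmSym.n ++ SmSym.sharp :: Z := by
  intro T hT
  induction T with
  | nil => simp at hT
  | cons a T ih =>
    cases a with
    | sharp => exact ⟨0, T, by simp⟩
    | n =>
      have : SmSym.sharp ∈ T := by simpa using hT
      obtain ⟨k, Z, rfl⟩ := ih this
      exact ⟨k + 1, Z, by simp [List.replicate_succ]⟩

/-- The model. -/
def M0 : SmullyanModel SmSym where
  pred := SmullyanModel.simplePred SmSym.sharp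
  prefixFree := by
    rintro H ⟨X, hX, rfl⟩ Y hY ⟨X', hX', hE⟩
    obtain ⟨Z, a, rfl⟩ : ∃ Z b, Y = Z ++ [b] := by
      rcases List.eq_nil_or_concat Y with h | ⟨Z, b, h⟩
      · exact absurd h hY
      · exact ⟨Z, b, by simpa using h⟩
    rw [show X ++ [SmSym.sharp] ++ (Z ++ [a]) = (X ++ SmSym.sharp :: Z) ++ [a] by
      simp] at hE
    obtain ⟨h1, -⟩ := List.append_inj' hE (by simp)
    exact hX' (h1 ▸ (by simp : SmSym.sharp ∈ X ++ SmSym.sharp :: Z))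
  phi := fun H => if Even (H.count SmSym.n) then sS else sSᶜ

lemma phi_even {H : List SmSym} (h : Even (H.count SmSym.n)) : M0.phi H = sS :=
  if_pos h

lemma phi_odd {H : List SmSym} (h : ¬ Even (H.count SmSym.n)) : M0.phi H = sSᶜ :=
  if_neg h

lemma trueSet_eq : M0.trueSet = sS := by
  ext T
  constructor
  · rintro ⟨H, ⟨X, hX, rfl⟩, Z, hZ, rfl⟩
    have hk : (X ++ [SmSym.sharp]).count SmSym.n = X.length := by
      simp [List.count_append, count_n_all_n hX]
    have hrep : X ++ [SmSym.sharp] ++ Z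
        = List.replicate X.length SmSym.n ++ SmSym.sharp :: Z := by
      conv_lhs => rw [all_n_of_not_sharp hX]
      simp
    rw [hrep, sent_mem_sS]
    by_cases he : Even X.length
    · rw [phi_even (hk ▸ he)] at hZ
      exact iff_of_true hZ he
    · rw [phi_odd (hk ▸ he)] at hZ
      exact iff_of_false hZ he
  · intro hT
    have hsh : SmSym.sharp ∈ T := by
      obtain ⟨X, i, -, rfl⟩ := hT
      simp
    obtain ⟨k, Z, rfl⟩ := firstSplit T hsh
    rw [sent_mem_sS] at hT
    refine ⟨List.replicate k SmSym.n ++ [SmSym.sharp],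
      ⟨List.replicate k SmSym.n, by simp [List.eq_of_mem_replicate], rfl⟩,
      Z, ?_, by simp⟩
    have hk : (List.replicate k SmSym.n ++ [SmSym.sharp]).count SmSym.n = k := by
      simp [List.count_append, List.count_replicate_self]
    by_cases he : Even k
    · rw [phi_even (by rw [hk]; exact he)]
      exact hT.mpr he
    · rw [phi_odd (by rw [hk]; exact he)]
      exact fun h => he (hT.mp h)

end Stmt18Aux

/-- There is an `n`-simple model (Σ = {n, ♯},
Φ(♯) = {X♯n^i : i ∈ ℕ, the number of occurrences of n in X is odd})
satisfying F-Tarski but not T-Tarski. -/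
theorem stmt_18 :
    ∃ M : SmullyanModel SmSym,
      M.pred = SmullyanModel.simplePred SmSym.sharp ∧
      M.IsNModel SmSym.n ∧
      M.phi [SmSym.sharp] =
        {L : List SmSym | ∃ X : List SmSym, ∃ i : ℕ, Odd (X.count SmSym.n) ∧
          L = X ++ SmSym.sharp :: List.replicate i SmSym.n} ∧
      M.FTarski ∧
      ¬ M.TTarski := by
  classical
  open Stmt18Aux in
  refine ⟨M0, rfl, ?_, ?_, ?_, ?_⟩
  · -- IsNModel
    rintro H ⟨X, hX, rfl⟩
    constructor
    · exact ⟨SmSym.n :: X, by simpa using hX, rfl⟩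
    · have hc : (SmSym.n :: (X ++ [SmSym.sharp])).count SmSym.n
          = (X ++ [SmSym.sharp]).count SmSym.n + 1 := by
        simp [List.count_cons]
      by_cases he : Even ((X ++ [SmSym.sharp]).count SmSym.n)
      · rw [phi_odd (by rw [hc]; simpa [Nat.even_add_one] using he),
          phi_even he]
        rfl
      · rw [phi_even (by rw [hc]; simpa [Nat.even_add_one] using he),
          phi_odd he]
        ext Z
        simp
  · -- Φ(♯)
    exact phi_even (by simp)
  · -- F-Tarski
    rintro ⟨H, ⟨X, hX, rfl⟩, hphi⟩
    by_cases he : Even ((X ++ [SmSym.sharp]).count SmSym.n)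
    · rw [phi_even he] at hphi
      have hw : [SmSym.n, SmSym.sharp] ∈ sS :=
        ⟨[SmSym.n], 0, by simp, by simp⟩
      have hw' := hw
      rw [hphi] at hw'
      exact hw'.2 (trueSet_eq ▸ hw)
    · rw [phi_odd he] at hphi
      have h0 : ([] : List SmSym) ∈ sSᶜ := by
        rintro ⟨X', i, -, h⟩
        exact absurd h.symm (by simp)
      rw [hphi] at h0
      obtain ⟨H', ⟨X', hX', rfl⟩, Y, hY⟩ := h0.1
      exact absurd hY.symm (by simp)
  · -- ¬ T-Tarski
    intro h
    exact h ⟨[SmSym.sharp], ⟨[], by simp, rfl⟩,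
      by rw [phi_even (by simp), trueSet_eq]⟩
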